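/- Let ρ be a probability measure on ℝ^d, and let U := Σ_{n=0}^∞ ρ^{*n} and U⁻ := Σ_{n=0}^∞ (ρ⁻)^{*n} with ρ⁻ := ρ(−·). If (U * U⁻)(B_0^{r_0}) < ∞ for some r_0 > 0, then (U * U⁻)(B) < ∞ for every bounded Borel set B ⊆ ℝ^d; in particular (U * U⁻)(B_0^r) < ∞ for every r > 0. -/

import Mathlib

open MeasureTheory

/-- Convolution of two measures on `ℝ^d`: the pushforward of the product measure
under addition. -/
noncomputable def mconv {d : ℕ} (μ ν : Measure (EuclideanSpace ℝ (Fin d))) :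
    Measure (EuclideanSpace ℝ (Fin d)) :=
  Measure.map (fun p => p.1 + p.2) (μ.prod ν)

/-- Convolution powers: `ρ^{*0} = δ_0`, `ρ^{*(n+1)} = ρ^{*n} * ρ`. -/
noncomputable def convPow {d : ℕ} (ρ : Measure (EuclideanSpace ℝ (Fin d))) :
    ℕ → Measure (EuclideanSpace ℝ (Fin d))
  | 0 => Measure.dirac 0
  | n + 1 => mconv (convPow ρ n) ρ

/-- Expected occupation measure `U = Σ_{n≥0} ρ^{*n}` of the random walk with step
distribution `ρ`. -/
noncomputable def occMeasure {d : ℕ} (ρ : Measure (EuclideanSpace ℝ (Fin d))) :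
    Measure (EuclideanSpace ℝ (Fin d)) :=
  Measure.sum (fun n => convPow ρ n)

/-- Reflected measure `ρ⁻ = ρ(−·)`. -/
noncomputable def mrefl {d : ℕ} (ρ : Measure (EuclideanSpace ℝ (Fin d))) :
    Measure (EuclideanSpace ℝ (Fin d)) :=
  Measure.map (fun x => -x) ρ

section Aux

variable {d : ℕ}

local notation "E" => EuclideanSpace ℝ (Fin d)

lemma mconv_eq_conv (μ ν : Measure E) : mconv μ ν = μ.conv ν := rfl

instance mconv_sfinite (μ ν : Measure E) [SFinite μ] [SFinite ν] : SFinite (mconv μ ν) := by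
  rw [mconv_eq_conv]; infer_instance

instance mconv_prob (μ ν : Measure E) [IsProbabilityMeasure μ] [IsProbabilityMeasure ν] :
    IsProbabilityMeasure (mconv μ ν) := by
  rw [mconv_eq_conv]; infer_instance

instance mrefl_prob (ρ : Measure E) [IsProbabilityMeasure ρ] :
    IsProbabilityMeasure (mrefl ρ) :=
  Measure.isProbabilityMeasure_map measurable_neg.aemeasurable

instance convPow_prob (ρ : Measure E) [IsProbabilityMeasure ρ] (n : ℕ) :
    IsProbabilityMeasure (convPow ρ n) := by
  induction n with
  | zero => show IsProbabilityMeasure (Measure.dirac (0 : E)); infer_instance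
  | succ n ih => show IsProbabilityMeasure (mconv (convPow ρ n) ρ); infer_instance

instance occ_sfinite (ρ : Measure E) [IsProbabilityMeasure ρ] : SFinite (occMeasure ρ) := by
  unfold occMeasure; infer_instance

lemma lintegral_mconv (μ ν : Measure E) [SFinite μ] [SFinite ν] {f : E → ENNReal}
    (hf : Measurable f) :
    ∫⁻ z, f z ∂(mconv μ ν) = ∫⁻ x, ∫⁻ y, f (x + y) ∂ν ∂μ := by
  rw [mconv, lintegral_map hf (by fun_prop)]
  exact lintegral_prod _ (by fun_prop : Measurable fun p : E × E => f (p.1 + p.2)).aemeasurable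

lemma mconv_apply (μ ν : Measure E) [SFinite ν] {s : Set E} (hs : MeasurableSet s) :
    mconv μ ν s = ∫⁻ x, ν ((fun y => x + y) ⁻¹' s) ∂μ := by
  rw [mconv, Measure.map_apply (by fun_prop) hs,
    Measure.prod_apply (hs.preimage (by fun_prop))]
  rfl

lemma mconv_mono {μ μ' ν ν' : Measure E} [SFinite ν] [SFinite ν']
    (h1 : μ ≤ μ') (h2 : ν ≤ ν') : mconv μ ν ≤ mconv μ' ν' := by
  rw [Measure.le_iff]
  intro s hs
  rw [mconv_apply _ _ hs, mconv_apply _ _ hs]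
  calc ∫⁻ x, ν ((fun y => x + y) ⁻¹' s) ∂μ
      ≤ ∫⁻ x, ν' ((fun y => x + y) ⁻¹' s) ∂μ :=
        lintegral_mono fun x => Measure.le_iff'.1 h2 _
    _ ≤ ∫⁻ x, ν' ((fun y => x + y) ⁻¹' s) ∂μ' := lintegral_mono' h1 le_rfl

lemma mconv_comm (μ ν : Measure E) [SFinite μ] [SFinite ν] : mconv μ ν = mconv ν μ := by
  rw [mconv_eq_conv, mconv_eq_conv, Measure.conv_comm]

lemma mconv_assoc (μ ν κ : Measure E) [SFinite μ] [SFinite ν] [SFinite κ] :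
    mconv (mconv μ ν) κ = mconv μ (mconv ν κ) := by
  ext s hs
  have h1 : Measurable (s.indicator (1 : E → ENNReal)) := measurable_one.indicator hs
  rw [← lintegral_indicator_one hs, ← lintegral_indicator_one hs,
    lintegral_mconv _ _ h1, lintegral_mconv _ _ h1,
    lintegral_mconv μ ν
      (f := fun x => ∫⁻ y, s.indicator (1 : E → ENNReal) (x + y) ∂κ)
      (Measurable.lintegral_prod_right (by fun_prop))]
  refine lintegral_congr fun x => ?_
  rw [lintegral_mconv ν κ (f := fun z => s.indicator (1 : E → ENNReal) (x + z)) (by fun_prop)]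
  refine lintegral_congr fun y => lintegral_congr fun z => ?_
  rw [add_assoc]

lemma mconv_sum (μ ν : ℕ → Measure E) [∀ n, SFinite (μ n)] [∀ n, SFinite (ν n)] :
    mconv (Measure.sum μ) (Measure.sum ν)
      = Measure.sum (fun p : ℕ × ℕ => mconv (μ p.1) (ν p.2)) := by
  rw [mconv, Measure.prod_sum, Measure.map_sum (by fun_prop : Measurable
    fun p : E × E => p.1 + p.2).aemeasurable]
  rfl

lemma mconv_sum_right (μ : Measure E) (ν : ℕ → Measure E) [SFinite μ] [∀ n, SFinite (ν n)] :
    mconv μ (Measure.sum ν) = Measure.sum (fun n => mconv μ (ν n)) := by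
  rw [mconv, Measure.prod_sum_right, Measure.map_sum (by fun_prop : Measurable
    fun p : E × E => p.1 + p.2).aemeasurable]
  rfl

lemma mconv_dirac_zero (μ : Measure E) [SFinite μ] : mconv μ (Measure.dirac 0) = μ := by
  rw [mconv, Measure.prod_dirac, Measure.map_map (by fun_prop) (by fun_prop)]
  simp [Function.comp_def]

lemma convPow_add (ρ : Measure E) [IsProbabilityMeasure ρ] (m n : ℕ) :
    mconv (convPow ρ m) (convPow ρ n) = convPow ρ (m + n) := by
  induction n with
  | zero =>
      show mconv (convPow ρ m) (Measure.dirac 0) = _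
      rw [mconv_dirac_zero, Nat.add_zero]
  | succ n ih =>
      show mconv (convPow ρ m) (mconv (convPow ρ n) ρ) = mconv (convPow ρ (m + n)) ρ
      rw [← mconv_assoc, ih]

lemma mconv_occ_le (ρ : Measure E) [IsProbabilityMeasure ρ] (n : ℕ) :
    mconv (convPow ρ n) (occMeasure ρ) ≤ occMeasure ρ := by
  rw [occMeasure, mconv_sum_right]
  rw [Measure.le_iff]
  intro s hs
  rw [Measure.sum_apply _ hs, Measure.sum_apply _ hs]
  calc ∑' a, (mconv (convPow ρ n) (convPow ρ a)) s
      = ∑' a, convPow ρ (n + a) s := by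
        exact tsum_congr fun a => by rw [convPow_add]
    _ ≤ ∑' k, convPow ρ k s :=
        ENNReal.tsum_comp_le_tsum_of_injective (add_right_injective n) fun k => convPow ρ k s

lemma mrefl_mrefl (ρ : Measure E) : mrefl (mrefl ρ) = ρ := by
  rw [mrefl, mrefl, Measure.map_map (by fun_prop) (by fun_prop)]
  simp [Function.comp_def]

lemma mrefl_mconv (μ ν : Measure E) [SFinite μ] [SFinite ν] :
    mrefl (mconv μ ν) = mconv (mrefl μ) (mrefl ν) := by
  rw [mconv, mrefl, Measure.map_map (by fun_prop) (by fun_prop), mconv, mrefl, mrefl,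
    Measure.map_prod_map _ _ (by fun_prop) (by fun_prop),
    Measure.map_map (by fun_prop) (by fun_prop)]
  refine congrFun (congrArg _ ?_) _
  funext p
  simp [Function.comp_def, Prod.map, neg_add]
  abel

lemma mrefl_convPow (ρ : Measure E) [IsProbabilityMeasure ρ] (n : ℕ) :
    mrefl (convPow ρ n) = convPow (mrefl ρ) n := by
  induction n with
  | zero =>
      show mrefl (Measure.dirac 0) = Measure.dirac 0
      rw [mrefl, Measure.map_dirac' (by fun_prop)]
      simp
  | succ n ih =>
      show mrefl (mconv (convPow ρ n) ρ) = mconv (convPow (mrefl ρ) n) (mrefl ρ)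
      rw [mrefl_mconv, ih]

lemma mconv_four (a b c e : Measure E) [SFinite a] [SFinite b] [SFinite c] [SFinite e] :
    mconv (mconv a b) (mconv c e) = mconv (mconv a c) (mconv b e) := by
  rw [mconv_assoc, mconv_assoc, ← mconv_assoc b c e, mconv_comm b c, mconv_assoc c b e]

/-- Key translation bound: finiteness on one ball gives finiteness on all balls of
half the radius. -/
lemma key_ball (ρ : Measure E) [IsProbabilityMeasure ρ] (r₀ : ℝ)
    (hfin : mconv (occMeasure ρ) (occMeasure (mrefl ρ)) (Metric.ball 0 r₀) < ⊤)
    (x : E) : mconv (occMeasure ρ) (occMeasure (mrefl ρ)) (Metric.ball x (r₀ / 2)) < ⊤ := by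
  set U := occMeasure ρ with hU
  set V := occMeasure (mrefl ρ) with hV
  set Q := mconv U V with hQdef
  by_cases h0 : Q (Metric.ball x (r₀ / 2)) = 0
  · rw [h0]; exact ENNReal.zero_lt_top
  obtain ⟨⟨m, n⟩, hc⟩ :
      ∃ p : ℕ × ℕ, mconv (convPow ρ p.1) (convPow (mrefl ρ) p.2)
        (Metric.ball x (r₀ / 2)) ≠ 0 := by
    by_contra h
    push_neg at h
    apply h0
    rw [hQdef, hU, hV, occMeasure, occMeasure, mconv_sum,
      Measure.sum_apply _ Metric.isOpen_ball.measurableSet]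
    simpa using fun p => h p
  set μ := mconv (convPow ρ m) (convPow (mrefl ρ) n) with hμ
  set ν := mconv (convPow ρ n) (convPow (mrefl ρ) m) with hν
  have hrefl : mrefl μ = ν := by
    rw [hμ, mrefl_mconv, mrefl_convPow, mrefl_convPow (mrefl ρ), mrefl_mrefl,
      mconv_comm]
  have hνball : ν (Metric.ball (-x) (r₀ / 2)) = μ (Metric.ball x (r₀ / 2)) := by
    rw [← hrefl, mrefl, Measure.map_apply (by fun_prop) Metric.isOpen_ball.measurableSet]
    congr 1
    ext y
    simp [Metric.mem_ball, dist_neg_neg]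
  have hle : mconv ν Q ≤ Q := by
    have e : mconv ν Q = mconv (mconv (convPow ρ n) U) (mconv (convPow (mrefl ρ) m) V) := by
      rw [hν, hQdef, mconv_four]
    rw [e, hQdef]
    exact mconv_mono (mconv_occ_le ρ n) (mconv_occ_le (mrefl ρ) m)
  have hmain : ν (Metric.ball (-x) (r₀ / 2)) * Q (Metric.ball x (r₀ / 2))
      ≤ Q (Metric.ball 0 r₀) := by
    have hsub : ∀ y ∈ Metric.ball (-x) (r₀ / 2),
        Metric.ball x (r₀ / 2) ⊆ (fun z => y + z) ⁻¹' Metric.ball (0 : E) r₀ := by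
      intro y hy z hz
      simp only [Metric.mem_ball, Set.mem_preimage, dist_eq_norm] at *
      have h1 : ‖y + x‖ < r₀ / 2 := by
        have := hy
        rwa [sub_neg_eq_add] at this
      have h2 : ‖z - x‖ < r₀ / 2 := hz
      have : y + z - 0 = (y + x) + (z - x) := by abel
      rw [this]
      calc ‖(y + x) + (z - x)‖ ≤ ‖y + x‖ + ‖z - x‖ := norm_add_le _ _
        _ < r₀ / 2 + r₀ / 2 := add_lt_add h1 h2
        _ = r₀ := by ring
    calc ν (Metric.ball (-x) (r₀ / 2)) * Q (Metric.ball x (r₀ / 2))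
        = ∫⁻ _ in Metric.ball (-x) (r₀ / 2), Q (Metric.ball x (r₀ / 2)) ∂ν := by
          rw [setLIntegral_const, mul_comm]
      _ ≤ ∫⁻ y in Metric.ball (-x) (r₀ / 2),
            Q ((fun z => y + z) ⁻¹' Metric.ball (0 : E) r₀) ∂ν := by
          refine lintegral_mono_ae ?_
          refine (ae_restrict_iff' Metric.isOpen_ball.measurableSet).2 (ae_of_all _ ?_)
          exact fun y hy => measure_mono (hsub y hy)
      _ ≤ ∫⁻ y, Q ((fun z => y + z) ⁻¹' Metric.ball (0 : E) r₀) ∂ν :=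
          setLIntegral_le_lintegral _ _
      _ = mconv ν Q (Metric.ball 0 r₀) :=
          (mconv_apply _ _ Metric.isOpen_ball.measurableSet).symm
      _ ≤ Q (Metric.ball 0 r₀) := Measure.le_iff'.1 hle _
  by_contra htop
  rw [not_lt, top_le_iff] at htop
  rw [htop, ENNReal.mul_top (by rw [hνball]; exact hc)] at hmain
  exact hfin.ne (top_le_iff.1 hmain)

end Aux

/-- If `(U * U⁻)(B_0^{r₀}) < ∞` for some `r₀ > 0`, then `U * U⁻` is
finite on every bounded Borel set; in particular on every ball `B_0^r`. -/
theorem stmt11 (d : ℕ) (hd : 1 ≤ d)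
    (ρ : Measure (EuclideanSpace ℝ (Fin d))) [IsProbabilityMeasure ρ]
    (r₀ : ℝ) (hr₀ : 0 < r₀)
    (hfin : mconv (occMeasure ρ) (occMeasure (mrefl ρ)) (Metric.ball 0 r₀) < ⊤) :
    (∀ B : Set (EuclideanSpace ℝ (Fin d)), MeasurableSet B → Bornology.IsBounded B →
        mconv (occMeasure ρ) (occMeasure (mrefl ρ)) B < ⊤) ∧
      ∀ r : ℝ, 0 < r →
        mconv (occMeasure ρ) (occMeasure (mrefl ρ)) (Metric.ball 0 r) < ⊤ := by
  have part1 : ∀ B : Set (EuclideanSpace ℝ (Fin d)), MeasurableSet B → Bornology.IsBounded B →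
      mconv (occMeasure ρ) (occMeasure (mrefl ρ)) B < ⊤ := by
    intro B _ hB
    obtain ⟨R, hR⟩ := hB.subset_closedBall (0 : EuclideanSpace ℝ (Fin d))
    have htb : TotallyBounded B :=
      (isCompact_closedBall (0 : EuclideanSpace ℝ (Fin d)) R).totallyBounded.subset hR
    obtain ⟨t, htf, hcov⟩ := Metric.totallyBounded_iff.1 htb (r₀ / 2) (by linarith)
    calc mconv (occMeasure ρ) (occMeasure (mrefl ρ)) B
        ≤ mconv (occMeasure ρ) (occMeasure (mrefl ρ)) (⋃ y ∈ t, Metric.ball y (r₀ / 2)) :=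
          measure_mono hcov
      _ < ⊤ := measure_biUnion_lt_top htf fun y _ => key_ball ρ r₀ hfin y
  exact ⟨part1, fun r hr => part1 _ Metric.isOpen_ball.measurableSet Metric.isBounded_ball⟩
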